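/- The state space of the hypergraph H₅(19) — atoms {1,...,19} with blocks {1,2,3}, {1,4,5}, {1,6,7}, {2,8,9}, {2,10,11}, {3,12,13}, {3,14,15}, {4,8,12}, {4,10,14}, {5,9,15}, {5,11,13}, {6,13,16}, {6,15,17}, {7,11,18}, {7,12,19}, {8,17,18}, {9,16,19}, {10,17,19}, {14,16,18} — is affinely parametrized by (x,y) = (s(15), s(19)) over the pentagon {0 ≤ x ≤ 2/3, 0 ≤ y ≤ 2/3, x − y ≤ 1/3}, and has exactly 5 extreme points: (0,0), (0,2/3), (1/3,0), (2/3,1/3), (2/3,2/3). -/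

import Mathlib

/-- The 19 blocks of the hypergraph H₅(19) on atoms {1,...,19}. -/
def H5Blocks : Finset (Finset ℕ) :=
  { {1,2,3}, {1,4,5}, {1,6,7}, {2,8,9}, {2,10,11}, {3,12,13}, {3,14,15},
    {4,8,12}, {4,10,14}, {5,9,15}, {5,11,13}, {6,13,16}, {6,15,17},
    {7,11,18}, {7,12,19}, {8,17,18}, {9,16,19}, {10,17,19}, {14,16,18} }

/-- A state on H₅(19): nonnegative on the atoms, summing to 1 on every block. -/
def H5IsState (s : ℕ → ℝ) : Prop :=
  (∀ a ∈ Finset.Icc 1 19, 0 ≤ s a) ∧ ∀ b ∈ H5Blocks, ∑ a ∈ b, s a = 1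

/-- The state of H₅(19) with parameters `x = s 15`, `y = s 19`: `s 18 = y`,
`s 6 = 1/3 - x + y`, value `x` on atoms 1, 13, 15; value `2/3 - x` on atoms 3, 5;
value `2/3 - y` on atoms 7, 16, 17; and `1/3` on all remaining atoms. -/
noncomputable def H5StateOf (x y : ℝ) : ℕ → ℝ := fun a =>
  if a ∈ ({1, 13, 15} : Finset ℕ) then x
  else if a ∈ ({18, 19} : Finset ℕ) then y
  else if a = 6 then 1/3 - x + y
  else if a ∈ ({3, 5} : Finset ℕ) then 2/3 - x
  else if a ∈ ({7, 16, 17} : Finset ℕ) then 2/3 - y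
  else 1/3

/-- The pentagon {0 ≤ x ≤ 2/3, 0 ≤ y ≤ 2/3, x − y ≤ 1/3}. -/
def H5Pent : Set (ℝ × ℝ) :=
  {p | 0 ≤ p.1 ∧ p.1 ≤ 2/3 ∧ 0 ≤ p.2 ∧ p.2 ≤ 2/3 ∧ p.1 - p.2 ≤ 1/3}

/-- Membership in a convex hull via an explicit 5-point convex combination. -/
lemma aux_mem_hull5 {V : Set (ℝ × ℝ)} {A B C D E p : ℝ × ℝ} {wA wB wC wD wE : ℝ}
    (hA : A ∈ V) (hB : B ∈ V) (hC : C ∈ V) (hD : D ∈ V) (hE : E ∈ V)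
    (h0A : 0 ≤ wA) (h0B : 0 ≤ wB) (h0C : 0 ≤ wC) (h0D : 0 ≤ wD) (h0E : 0 ≤ wE)
    (hsum : wA + wB + wC + wD + wE = 1)
    (hp : wA • A + wB • B + wC • C + wD • D + wE • E = p) :
    p ∈ convexHull ℝ V := by
  have h := Finset.centerMass_mem_convexHull (Finset.univ : Finset (Fin 5))
    (w := ![wA, wB, wC, wD, wE]) (z := ![A, B, C, D, E])
    (fun i _ => by fin_cases i <;> assumption)
    (by rw [Fin.sum_univ_five]; simp; linarith)
    (fun i _ => by fin_cases i <;> assumption)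
  rw [Finset.centerMass_eq_of_sum_1 _ _ (by rw [Fin.sum_univ_five]; simp; linarith),
    Fin.sum_univ_five] at h
  simp only [Matrix.cons_val_zero, Matrix.cons_val_one, Matrix.head_cons,
    Matrix.cons_val_two, Matrix.tail_cons, Matrix.cons_val_three, Matrix.cons_val_four,
    Matrix.head_fin_const] at h
  rwa [hp] at h

/-- If a convex combination attains the common upper bound, both points attain it. -/
lemma aux_both_eq {a b u v c : ℝ} (ha : 0 < a) (hb : 0 < b) (hu : u ≤ c) (hv : v ≤ c)
    (h : a * u + b * v = (a + b) * c) : u = c ∧ v = c := by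
  have h1 : a * (c - u) = 0 := by
    nlinarith [mul_nonneg ha.le (sub_nonneg.2 hu), mul_nonneg hb.le (sub_nonneg.2 hv)]
  have h2 : b * (c - v) = 0 := by
    nlinarith [mul_nonneg ha.le (sub_nonneg.2 hu), mul_nonneg hb.le (sub_nonneg.2 hv)]
  constructor
  · have := (mul_eq_zero.mp h1).resolve_left ha.ne'
    linarith
  · have := (mul_eq_zero.mp h2).resolve_left hb.ne'
    linarith

/-- Lower-bound version of `aux_both_eq`. -/
lemma aux_both_eq' {a b u v c : ℝ} (ha : 0 < a) (hb : 0 < b) (hu : c ≤ u) (hv : c ≤ v)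
    (h : a * u + b * v = (a + b) * c) : u = c ∧ v = c := by
  have := aux_both_eq (u := -u) (v := -v) (c := -c) ha hb (neg_le_neg hu) (neg_le_neg hv)
    (by ring_nf; ring_nf at h; linarith)
  constructor <;> linarith [this.1, this.2]

set_option maxHeartbeats 800000 in
lemma aux_partA : ∀ s : ℕ → ℝ, H5IsState s →
    (s 15, s 19) ∈ H5Pent ∧ ∀ a ∈ Finset.Icc 1 19, s a = H5StateOf (s 15) (s 19) a := by
  rintro s ⟨hpos, hsum⟩
  have e1 := hsum {1,2,3} (by decide)
  have e2 := hsum {1,4,5} (by decide)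
  have e3 := hsum {1,6,7} (by decide)
  have e4 := hsum {2,8,9} (by decide)
  have e5 := hsum {2,10,11} (by decide)
  have e6 := hsum {3,12,13} (by decide)
  have e7 := hsum {3,14,15} (by decide)
  have e8 := hsum {4,8,12} (by decide)
  have e9 := hsum {4,10,14} (by decide)
  have e10 := hsum {5,9,15} (by decide)
  have e11 := hsum {5,11,13} (by decide)
  have e12 := hsum {6,13,16} (by decide)
  have e13 := hsum {6,15,17} (by decide)
  have e14 := hsum {7,11,18} (by decide)
  have e15 := hsum {7,12,19} (by decide)
  have e16 := hsum {8,17,18} (by decide)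
  have e17 := hsum {9,16,19} (by decide)
  have e18 := hsum {10,17,19} (by decide)
  have e19 := hsum {14,16,18} (by decide)
  simp [Finset.sum_insert, Finset.mem_insert] at e1 e2 e3 e4 e5 e6 e7 e8 e9 e10 e11 e12 e13 e14 e15 e16 e17 e18 e19
  have v1 : s 1 = s 15 := by linarith
  have v2 : s 2 = 1/3 := by linarith
  have v3 : s 3 = 2/3 - s 15 := by linarith
  have v4 : s 4 = 1/3 := by linarith
  have v5 : s 5 = 2/3 - s 15 := by linarith
  have v6 : s 6 = 1/3 - s 15 + s 19 := by linarith
  have v7 : s 7 = 2/3 - s 19 := by linarith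
  have v8 : s 8 = 1/3 := by linarith
  have v9 : s 9 = 1/3 := by linarith
  have v10 : s 10 = 1/3 := by linarith
  have v11 : s 11 = 1/3 := by linarith
  have v12 : s 12 = 1/3 := by linarith
  have v13 : s 13 = s 15 := by linarith
  have v14 : s 14 = 1/3 := by linarith
  have v16 : s 16 = 2/3 - s 19 := by linarith
  have v17 : s 17 = 2/3 - s 19 := by linarith
  have v18 : s 18 = s 19 := by linarith
  constructor
  · exact ⟨hpos 15 (by decide), by linarith [hpos 3 (by decide)], hpos 19 (by decide),
      by linarith [hpos 7 (by decide)], by linarith [hpos 6 (by decide)]⟩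
  · intro a ha
    simp only [Finset.mem_Icc] at ha
    obtain ⟨ha1, ha2⟩ := ha
    interval_cases a <;> norm_num [H5StateOf] <;> linarith

set_option maxHeartbeats 800000 in
lemma aux_partB : ∀ p ∈ H5Pent, H5IsState (H5StateOf p.1 p.2) := by
  rintro p ⟨hx0, hx1, hy0, hy1, hxy⟩
  constructor
  · intro a ha
    simp only [Finset.mem_Icc] at ha
    obtain ⟨ha1, ha2⟩ := ha
    interval_cases a <;> norm_num [H5StateOf] <;> linarith
  · intro b hb
    fin_cases hb <;>
      · norm_num [H5StateOf, Finset.sum_insert, Finset.mem_insert]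
        try ring

set_option maxHeartbeats 800000 in
lemma aux_partC : Set.extremePoints ℝ H5Pent =
    {(0, 0), (0, 2/3), (1/3, 0), (2/3, 1/3), (2/3, 2/3)} := by
  have hVsub : ({(0, 0), (0, 2/3), (1/3, 0), (2/3, 1/3), (2/3, 2/3)} : Set (ℝ × ℝ)) ⊆ H5Pent := by
    rintro q (rfl | rfl | rfl | rfl | rfl) <;>
      exact ⟨by norm_num, by norm_num, by norm_num, by norm_num, by norm_num⟩
  have hconv : Convex ℝ H5Pent := by
    rintro q ⟨hq1, hq2, hq3, hq4, hq5⟩ r ⟨hr1, hr2, hr3, hr4, hr5⟩ a b ha hb hab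
    refine ⟨?_, ?_, ?_, ?_, ?_⟩ <;>
      simp only [Prod.fst_add, Prod.snd_add, Prod.smul_fst, Prod.smul_snd, smul_eq_mul] <;>
      nlinarith [mul_nonneg ha hq1, mul_nonneg hb hr1, mul_nonneg ha hq3, mul_nonneg hb hr3,
        mul_le_mul_of_nonneg_left hq2 ha, mul_le_mul_of_nonneg_left hr2 hb,
        mul_le_mul_of_nonneg_left hq4 ha, mul_le_mul_of_nonneg_left hr4 hb,
        mul_le_mul_of_nonneg_left hq5 ha, mul_le_mul_of_nonneg_left hr5 hb]
  have hEq : H5Pent =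
      convexHull ℝ ({(0, 0), (0, 2/3), (1/3, 0), (2/3, 1/3), (2/3, 2/3)} : Set (ℝ × ℝ)) := by
    apply le_antisymm
    · rintro ⟨x, y⟩ ⟨hx0, hx1, hy0, hy1, hxy⟩
      rcases le_total (2*y) x with hc | hc
      · exact aux_mem_hull5 (A := ((0:ℝ),(0:ℝ))) (B := ((0:ℝ),(2/3:ℝ))) (C := ((1/3:ℝ),(0:ℝ))) (D := ((2/3:ℝ),(1/3:ℝ))) (E := ((2/3:ℝ),(2/3:ℝ))) (wA := 1-3*x+3*y) (wB := 0) (wC := 3*x-6*y) (wD := 3*y) (wE := 0)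
          (by norm_num) (by norm_num) (by norm_num) (by norm_num) (by norm_num)
          (by simp at hxy ⊢; linarith) le_rfl (by linarith) (by linarith) le_rfl (by ring)
          (by simp [Prod.ext_iff]; constructor <;> ring)
      · rcases le_total y x with hc2 | hc2
        · exact aux_mem_hull5 (A := ((0:ℝ),(0:ℝ))) (B := ((0:ℝ),(2/3:ℝ))) (C := ((1/3:ℝ),(0:ℝ))) (D := ((2/3:ℝ),(1/3:ℝ))) (E := ((2/3:ℝ),(2/3:ℝ))) (wA := 1-(3/2)*x) (wB := 0) (wC := 0) (wD := 3*x-3*y)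
            (wE := 3*y-(3/2)*x)
            (by norm_num) (by norm_num) (by norm_num) (by norm_num) (by norm_num)
            (by simp at hx1 ⊢; linarith) le_rfl le_rfl (by linarith) (by linarith) (by ring)
            (by simp [Prod.ext_iff]; constructor <;> ring)
        · exact aux_mem_hull5 (A := ((0:ℝ),(0:ℝ))) (B := ((0:ℝ),(2/3:ℝ))) (C := ((1/3:ℝ),(0:ℝ))) (D := ((2/3:ℝ),(1/3:ℝ))) (E := ((2/3:ℝ),(2/3:ℝ))) (wA := 1-(3/2)*y) (wB := (3/2)*(y-x)) (wC := 0) (wD := 0)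
            (wE := (3/2)*x)
            (by norm_num) (by norm_num) (by norm_num) (by norm_num) (by norm_num)
            (by simp at hy1 ⊢; linarith) (by linarith) le_rfl le_rfl (by linarith) (by ring)
            (by simp [Prod.ext_iff]; constructor <;> ring)
    · exact convexHull_min hVsub hconv
  apply le_antisymm
  · rw [hEq]
    exact extremePoints_convexHull_subset
  · rintro q (rfl | rfl | rfl | rfl | rfl)
    · refine ⟨hVsub (by norm_num), ?_⟩
      rintro q1 ⟨hq1, hq2, hq3, hq4, hq5⟩ q2 ⟨hr1, hr2, hr3, hr4, hr5⟩ ⟨a, b, ha, hb, hab, habq⟩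
      rw [Prod.ext_iff] at habq
      simp only [Prod.fst_add, Prod.snd_add, Prod.smul_fst, Prod.smul_snd, smul_eq_mul] at habq
      obtain ⟨h1, h2⟩ := habq
      have c1 := aux_both_eq' ha hb hq1 hr1 (by rw [hab]; simpa using h1)
      have c2 := aux_both_eq' ha hb hq3 hr3 (by rw [hab]; simpa using h2)
      exact Prod.ext_iff.mpr ⟨c1.1, c2.1⟩
    · refine ⟨hVsub (by norm_num), ?_⟩
      rintro q1 ⟨hq1, hq2, hq3, hq4, hq5⟩ q2 ⟨hr1, hr2, hr3, hr4, hr5⟩ ⟨a, b, ha, hb, hab, habq⟩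
      rw [Prod.ext_iff] at habq
      simp only [Prod.fst_add, Prod.snd_add, Prod.smul_fst, Prod.smul_snd, smul_eq_mul] at habq
      obtain ⟨h1, h2⟩ := habq
      have c1 := aux_both_eq' ha hb hq1 hr1 (by rw [hab]; simpa using h1)
      have c2 := aux_both_eq ha hb hq4 hr4 (by rw [hab]; simpa using h2)
      exact Prod.ext_iff.mpr ⟨c1.1, c2.1⟩
    · refine ⟨hVsub (by norm_num), ?_⟩
      rintro q1 ⟨hq1, hq2, hq3, hq4, hq5⟩ q2 ⟨hr1, hr2, hr3, hr4, hr5⟩ ⟨a, b, ha, hb, hab, habq⟩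
      rw [Prod.ext_iff] at habq
      simp only [Prod.fst_add, Prod.snd_add, Prod.smul_fst, Prod.smul_snd, smul_eq_mul] at habq
      obtain ⟨h1, h2⟩ := habq
      have c2 := aux_both_eq' ha hb hq3 hr3 (by rw [hab]; simpa using h2)
      have c1 := aux_both_eq ha hb (u := q1.1) (v := q2.1) (c := 1/3)
        (by rw [c2.1] at hq5; linarith) (by rw [c2.2] at hr5; linarith)
        (by rw [hab]; simpa using h1)
      exact Prod.ext_iff.mpr ⟨c1.1, c2.1⟩
    · refine ⟨hVsub (by norm_num), ?_⟩
      rintro q1 ⟨hq1, hq2, hq3, hq4, hq5⟩ q2 ⟨hr1, hr2, hr3, hr4, hr5⟩ ⟨a, b, ha, hb, hab, habq⟩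
      rw [Prod.ext_iff] at habq
      simp only [Prod.fst_add, Prod.snd_add, Prod.smul_fst, Prod.smul_snd, smul_eq_mul] at habq
      obtain ⟨h1, h2⟩ := habq
      have c1 := aux_both_eq ha hb hq2 hr2 (by rw [hab]; simpa using h1)
      have c2 := aux_both_eq' ha hb (u := q1.2) (v := q2.2) (c := 1/3)
        (by rw [c1.1] at hq5; linarith) (by rw [c1.2] at hr5; linarith)
        (by rw [hab]; simpa using h2)
      exact Prod.ext_iff.mpr ⟨c1.1, c2.1⟩
    · refine ⟨hVsub (by norm_num), ?_⟩
      rintro q1 ⟨hq1, hq2, hq3, hq4, hq5⟩ q2 ⟨hr1, hr2, hr3, hr4, hr5⟩ ⟨a, b, ha, hb, hab, habq⟩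
      rw [Prod.ext_iff] at habq
      simp only [Prod.fst_add, Prod.snd_add, Prod.smul_fst, Prod.smul_snd, smul_eq_mul] at habq
      obtain ⟨h1, h2⟩ := habq
      have c1 := aux_both_eq ha hb hq2 hr2 (by rw [hab]; simpa using h1)
      have c2 := aux_both_eq ha hb hq4 hr4 (by rw [hab]; simpa using h2)
      exact Prod.ext_iff.mpr ⟨c1.1, c2.1⟩


/-- The state space of H₅(19) is affinely parametrized by `(x, y) = (s 15, s 19)` over
the pentagon {0 ≤ x ≤ 2/3, 0 ≤ y ≤ 2/3, x − y ≤ 1/3}, which has exactly 5 extreme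
points: (0,0), (0,2/3), (1/3,0), (2/3,1/3), (2/3,2/3). -/
theorem H5_state_space :
    (∀ s : ℕ → ℝ, H5IsState s →
      (s 15, s 19) ∈ H5Pent ∧ ∀ a ∈ Finset.Icc 1 19, s a = H5StateOf (s 15) (s 19) a) ∧
    (∀ p ∈ H5Pent, H5IsState (H5StateOf p.1 p.2)) ∧
    Set.extremePoints ℝ H5Pent =
      {(0, 0), (0, 2/3), (1/3, 0), (2/3, 1/3), (2/3, 2/3)} :=
  ⟨aux_partA, aux_partB, aux_partC⟩
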